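/- Let A be an n×n matrix, ℓ ≥ 0 an integer, and let B be the 2n×2n block matrix with blocks [[A, I],[0, 0]]. Then φ_ℓ(B) equals the block matrix [[φ_ℓ(A), φ_{ℓ+1}(A)],[0, (1/ℓ!)·I]]. -/
import Mathlib


open Matrix

/-- The matrix φ-functions: `φ_ℓ(M) = Σ_{k=0}^∞ M^k/(k+ℓ)!`. -/
noncomputable def phiM {m : Type*} [Fintype m] [DecidableEq m] (ℓ : ℕ)
    (M : Matrix m m ℝ) : Matrix m m ℝ :=
  ∑' k : ℕ, ((Nat.factorial (k + ℓ) : ℝ))⁻¹ • M ^ k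

section aux

attribute [local instance] Matrix.linftyOpNormedRing Matrix.linftyOpNormedAlgebra

lemma phiM_summable {m : Type*} [Fintype m] [DecidableEq m] (ℓ : ℕ)
    (M : Matrix m m ℝ) :
    Summable (fun k : ℕ => ((Nat.factorial (k + ℓ) : ℝ))⁻¹ • M ^ k) := by
  set C : ℝ := ‖(1 : Matrix m m ℝ)‖ + 1 with hC
  have hC1 : (1:ℝ) ≤ C := by have := norm_nonneg (1 : Matrix m m ℝ); linarith
  refine Summable.of_norm (Summable.of_nonneg_of_le (fun k => norm_nonneg _) ?_
    (((Real.summable_pow_div_factorial ‖M‖)).mul_left C))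
  intro k
  rw [norm_smul]
  have h1 : ‖((Nat.factorial (k + ℓ) : ℝ))⁻¹‖ ≤ ((Nat.factorial k : ℝ))⁻¹ := by
    rw [Real.norm_eq_abs, abs_of_nonneg (by positivity)]
    apply inv_anti₀ (by positivity)
    exact_mod_cast Nat.factorial_le (Nat.le_add_right k ℓ)
  have h2 : ‖M ^ k‖ ≤ C * ‖M‖ ^ k := by
    rcases Nat.eq_zero_or_pos k with rfl | hk
    · simp [hC]
    · calc ‖M ^ k‖ ≤ ‖M‖ ^ k := norm_pow_le' M hk
        _ ≤ C * ‖M‖ ^ k := by nlinarith [pow_nonneg (norm_nonneg M) k]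
  calc ‖((Nat.factorial (k + ℓ) : ℝ))⁻¹‖ * ‖M ^ k‖
      ≤ ((Nat.factorial k : ℝ))⁻¹ * (C * ‖M‖ ^ k) :=
        mul_le_mul h1 h2 (norm_nonneg _) (by positivity)
    _ = C * (‖M‖ ^ k / (Nat.factorial k)) := by ring

end aux

lemma hasSum_fromBlocks {n : ℕ} {f g : ℕ → Matrix (Fin n) (Fin n) ℝ}
    {F G : Matrix (Fin n) (Fin n) ℝ} (hf : HasSum f F) (hg : HasSum g G) :
    HasSum (fun k => Matrix.fromBlocks (f k) (g k) (0 : Matrix (Fin n) (Fin n) ℝ) 0)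
      (Matrix.fromBlocks F G 0 0) := by
  have h : HasSum (fun k => (f k, g k)) (F, G) := hf.prodMk hg
  let φ : Matrix (Fin n) (Fin n) ℝ × Matrix (Fin n) (Fin n) ℝ →+
      Matrix (Fin n ⊕ Fin n) (Fin n ⊕ Fin n) ℝ :=
    { toFun := fun p => Matrix.fromBlocks p.1 p.2 0 0
      map_zero' := by simp
      map_add' := by
        intro p q
        simp [Matrix.fromBlocks_add] }
  exact h.map φ (Continuous.matrix_fromBlocks continuous_fst continuous_snd
    continuous_const continuous_const)

theorem phiM_block {n : ℕ} (A : Matrix (Fin n) (Fin n) ℝ) (ℓ : ℕ) :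
    phiM ℓ (Matrix.fromBlocks A (1 : Matrix (Fin n) (Fin n) ℝ) 0 0) =
      Matrix.fromBlocks (phiM ℓ A) (phiM (ℓ + 1) A) 0
        (((Nat.factorial ℓ : ℝ))⁻¹ • (1 : Matrix (Fin n) (Fin n) ℝ)) := by
  set B := Matrix.fromBlocks A (1 : Matrix (Fin n) (Fin n) ℝ) 0 0 with hBdef
  have hpow : ∀ k : ℕ, B ^ (k + 1) =
      Matrix.fromBlocks (A ^ (k + 1)) (A ^ k) 0 0 := by
    intro k
    induction k with
    | zero => simp [hBdef]
    | succ k ih =>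
        rw [pow_succ, ih, hBdef, Matrix.fromBlocks_multiply]
        simp [← pow_succ]
  have hsA := phiM_summable ℓ A
  have hsA' : Summable (fun k : ℕ =>
      ((Nat.factorial (k + 1 + ℓ) : ℝ))⁻¹ • A ^ (k + 1)) :=
    (phiM_summable ℓ A).comp_injective (add_left_injective 1)
  have hsA'' : Summable (fun k : ℕ =>
      ((Nat.factorial (k + 1 + ℓ) : ℝ))⁻¹ • A ^ k) :=
    (phiM_summable (ℓ + 1) A).congr
      (fun k => by rw [show k + 1 + ℓ = k + (ℓ + 1) from by ring])
  have hblocksum :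
      HasSum (fun k : ℕ => ((Nat.factorial (k + 1 + ℓ) : ℝ))⁻¹ • B ^ (k + 1))
        (Matrix.fromBlocks (∑' k : ℕ, ((Nat.factorial (k + 1 + ℓ) : ℝ))⁻¹ • A ^ (k + 1))
          (phiM (ℓ + 1) A) 0 0) := by
    have h := hasSum_fromBlocks hsA'.hasSum hsA''.hasSum
    have he : (∑' k : ℕ, ((Nat.factorial (k + 1 + ℓ) : ℝ))⁻¹ • A ^ k) = phiM (ℓ + 1) A := by
      unfold phiM
      exact tsum_congr fun k => by rw [show k + 1 + ℓ = k + (ℓ + 1) from by ring]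
    rw [he] at h
    refine h.congr_fun fun k => ?_
    rw [hpow k, Matrix.fromBlocks_smul]
    simp
  have hsumB : Summable (fun k : ℕ => ((Nat.factorial (k + ℓ) : ℝ))⁻¹ • B ^ k) :=
    phiM_summable ℓ B
  have key : phiM ℓ B =
      ((Nat.factorial ℓ : ℝ))⁻¹ • (1 : Matrix (Fin n ⊕ Fin n) (Fin n ⊕ Fin n) ℝ) +
        ∑' k : ℕ, ((Nat.factorial (k + 1 + ℓ) : ℝ))⁻¹ • B ^ (k + 1) := by
    unfold phiM
    rw [Summable.tsum_eq_zero_add hsumB]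
    simp only [zero_add, pow_zero]
  rw [key, hblocksum.tsum_eq]
  have hA0 : phiM ℓ A =
      ((Nat.factorial ℓ : ℝ))⁻¹ • (1 : Matrix (Fin n) (Fin n) ℝ) +
        ∑' k : ℕ, ((Nat.factorial (k + 1 + ℓ) : ℝ))⁻¹ • A ^ (k + 1) := by
    unfold phiM
    rw [Summable.tsum_eq_zero_add hsA]
    simp only [zero_add, pow_zero]
  rw [hA0, ← Matrix.fromBlocks_one, Matrix.fromBlocks_smul,
    Matrix.fromBlocks_add]
  simp
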